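/- Let M be the rank-2 matroid on {1,2,3,1̄,2̄,3̄} whose parallel classes are {1,1̄}, {2,2̄}, {3}, {3̄} (bases are all 2-subsets except {1,1̄} and {2,2̄}). Then the Bergman fan (tropical linear space) L_M ⊆ T^6 is tropically isotropic: any two points x, y ∈ L_M satisfy that the minimum of x_i + y_{ī} over i ∈ [6] is attained at least twice or is ∞. However, the tropical symplectic relation min(μ_{11̄}, μ_{22̄}, μ_{33̄}) (with μ the {0,∞}-Plücker vector of M) is attained only once (at μ_{33̄} = 0, with μ_{11̄} = μ_{22̄} = ∞), so M does not satisfy the tropical symplectic relations. -/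

import Mathlib

/-- The minimum of `f` is attained at least twice, or `f` is identically `∞`. -/
def AAT {ι : Type*} (f : ι → WithTop ℝ) : Prop :=
  (∀ i, f i = ⊤) ∨ ∃ i j, i ≠ j ∧ f i = f j ∧ ∀ l, f i ≤ f l

/-- The tropical linear space of a (valuated matroid) vector `ν` of rank `r`. -/
def TLS {m : Type*} [Fintype m] [DecidableEq m] (r : ℕ) (ν : Finset m → WithTop ℝ) :
    Set (m → WithTop ℝ) :=
  {x | ∀ T : Finset m, T.card = r + 1 →
    AAT (fun i : {i : m // i ∈ T} => ν (T.erase (i : m)) + x (i : m))}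

/-- The `{0,∞}`-Plücker vector of the rank-2 matroid on `{1,2,3,1̄,2̄,3̄}` with parallel classes
`{1,1̄}, {2,2̄}, {3}, {3̄}`: bases are all `2`-subsets except `{1,1̄}` and `{2,2̄}`. -/
def mu4pts (B : Finset (Fin 3 ⊕ Fin 3)) : WithTop ℝ :=
  if B.card = 2 ∧ B ≠ {Sum.inl 0, Sum.inr 0} ∧ B ≠ {Sum.inl 1, Sum.inr 1} then 0 else ⊤

def Q3 (a b c : WithTop ℝ) : Prop :=
  (a = b ∧ a ≤ c) ∨ (a = c ∧ a ≤ b) ∨ (b = c ∧ b ≤ a)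

lemma aat3 {m : Type*} [DecidableEq m] (g : m → WithTop ℝ) (e1 e2 e3 : m)
    (h12 : e1 ≠ e2) (h13 : e1 ≠ e3) (h23 : e2 ≠ e3)
    (h : AAT (fun i : {i : m // i ∈ ({e1, e2, e3} : Finset m)} => g i)) :
    Q3 (g e1) (g e2) (g e3) := by
  have m1 : e1 ∈ ({e1, e2, e3} : Finset m) := by simp
  have m2 : e2 ∈ ({e1, e2, e3} : Finset m) := by simp
  have m3 : e3 ∈ ({e1, e2, e3} : Finset m) := by simp
  rcases h with hall | ⟨i, j, hij, heq, hle⟩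
  · have t1 : g e1 = ⊤ := hall ⟨e1, m1⟩
    have t2 : g e2 = ⊤ := hall ⟨e2, m2⟩
    have t3 : g e3 = ⊤ := hall ⟨e3, m3⟩
    exact Or.inl ⟨t1.trans t2.symm, by rw [t3]; exact le_top⟩
  · have hi := i.2
    have hj := j.2
    simp only [Finset.mem_insert, Finset.mem_singleton] at hi hj
    have hne : (i : m) ≠ (j : m) := fun hh => hij (Subtype.ext hh)
    have l1 : g i ≤ g e1 := hle ⟨e1, m1⟩
    have l2 : g i ≤ g e2 := hle ⟨e2, m2⟩
    have l3 : g i ≤ g e3 := hle ⟨e3, m3⟩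
    have heq' : g i = g j := heq
    rcases hi with h|h|h <;> rcases hj with h'|h'|h' <;>
      rw [h] at heq' hne l1 l2 l3 <;> rw [h'] at heq' hne <;>
      first
        | exact absurd rfl hne
        | exact Or.inl ⟨heq', l3⟩
        | exact Or.inl ⟨heq'.symm, heq'.symm.trans_le l3⟩
        | exact Or.inr (Or.inl ⟨heq', l2⟩)
        | exact Or.inr (Or.inl ⟨heq'.symm, heq'.symm.trans_le l2⟩)
        | exact Or.inr (Or.inr ⟨heq', l1⟩)
        | exact Or.inr (Or.inr ⟨heq'.symm, heq'.symm.trans_le l1⟩)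

lemma eq_of_Q3_top {a b : WithTop ℝ} (h : Q3 a b ⊤) : a = b := by
  rcases h with ⟨he, _⟩ | ⟨he, hl⟩ | ⟨he, hl⟩
  · exact he
  · rw [he] at hl ⊢; exact (top_le_iff.1 hl).symm
  · rw [he] at hl ⊢; exact top_le_iff.1 hl

lemma cancel {a c p s : WithTop ℝ} (hac : a ≤ c) (h : c + s < a + p) : s < p := by
  have hc : c ≠ ⊤ := by
    intro hc'; rw [hc', top_add] at h; exact absurd h not_top_lt
  have ha : a ≠ ⊤ := fun h' => hc (top_le_iff.1 (h' ▸ hac))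
  have h2 : a + s < a + p := lt_of_le_of_lt (add_le_add_left hac s) h
  exact (WithTop.add_lt_add_iff_left ha).1 h2

lemma noQ {u v w : WithTop ℝ} (h1 : w < u) (h2 : w < v) (h : Q3 u v w) : False := by
  rcases h with ⟨he, hl⟩ | ⟨he, hl⟩ | ⟨he, hl⟩
  · exact absurd hl (not_le.2 h1)
  · exact absurd he.symm h1.ne
  · exact absurd he.symm h2.ne

lemma key {a b c d p q r s : WithTop ℝ}
    (hx1 : Q3 a b c) (hx2 : Q3 a c d) (hx3 : Q3 b c d)
    (hy1 : Q3 p q s) (hy2 : Q3 p r s) (hy3 : Q3 q r s)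
    (h1 : c + s < a + p) (h2 : c + s < b + q) (h3 : c + s < d + r) : False := by
  rcases hx1 with ⟨hab, hac⟩ | ⟨hac, hab⟩ | ⟨hbc, hba⟩
  · exact noQ (cancel hac h1) (cancel (hab.symm.le.trans hac) h2) hy1
  · have hsp := cancel hac.le h1
    rcases hx3 with ⟨he, hl⟩ | ⟨he, hl⟩ | ⟨he, hl⟩
    · exact noQ hsp (cancel he.le h2) hy1
    · exact noQ hsp (cancel hl h2) hy1
    · exact noQ hsp (cancel he.ge h3) hy2
  · have hsq := cancel hbc.le h2
    rcases hx2 with ⟨he, hl⟩ | ⟨he, hl⟩ | ⟨he, hl⟩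
    · exact noQ (cancel he.le h1) hsq hy1
    · exact noQ (cancel hl h1) hsq hy1
    · exact noQ hsq (cancel he.ge h3) hy3

lemma mu_zero (B : Finset (Fin 3 ⊕ Fin 3))
    (h : B.card = 2 ∧ B ≠ {Sum.inl 0, Sum.inr 0} ∧ B ≠ {Sum.inl 1, Sum.inr 1}) :
    mu4pts B = 0 := by rw [mu4pts, if_pos h]

lemma mu_top (B : Finset (Fin 3 ⊕ Fin 3))
    (h : ¬(B.card = 2 ∧ B ≠ {Sum.inl 0, Sum.inr 0} ∧ B ≠ {Sum.inl 1, Sum.inr 1})) :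
    mu4pts B = ⊤ := by rw [mu4pts, if_neg h]

lemma extract (x : Fin 3 ⊕ Fin 3 → WithTop ℝ) (hx : x ∈ TLS 2 mu4pts)
    (e1 e2 e3 : Fin 3 ⊕ Fin 3) (h12 : e1 ≠ e2) (h13 : e1 ≠ e3) (h23 : e2 ≠ e3)
    (hcard : ({e1, e2, e3} : Finset (Fin 3 ⊕ Fin 3)).card = 2 + 1) :
    Q3 (mu4pts (({e1, e2, e3} : Finset _).erase e1) + x e1)
      (mu4pts (({e1, e2, e3} : Finset _).erase e2) + x e2)
      (mu4pts (({e1, e2, e3} : Finset _).erase e3) + x e3) :=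
  aat3 (fun i => mu4pts (({e1, e2, e3} : Finset _).erase i) + x i) e1 e2 e3 h12 h13 h23
    (hx _ hcard)

lemma extractQ (x : Fin 3 ⊕ Fin 3 → WithTop ℝ) (hx : x ∈ TLS 2 mu4pts)
    (e1 e2 e3 : Fin 3 ⊕ Fin 3) (h12 : e1 ≠ e2) (h13 : e1 ≠ e3) (h23 : e2 ≠ e3)
    (hcard : ({e1, e2, e3} : Finset (Fin 3 ⊕ Fin 3)).card = 2 + 1)
    (hm1 : mu4pts (({e1, e2, e3} : Finset _).erase e1) = 0)
    (hm2 : mu4pts (({e1, e2, e3} : Finset _).erase e2) = 0)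
    (hm3 : mu4pts (({e1, e2, e3} : Finset _).erase e3) = 0) :
    Q3 (x e1) (x e2) (x e3) := by
  have h := extract x hx e1 e2 e3 h12 h13 h23 hcard
  rwa [hm1, hm2, hm3, zero_add, zero_add, zero_add] at h

lemma extractE (x : Fin 3 ⊕ Fin 3 → WithTop ℝ) (hx : x ∈ TLS 2 mu4pts)
    (e1 e2 e3 : Fin 3 ⊕ Fin 3) (h12 : e1 ≠ e2) (h13 : e1 ≠ e3) (h23 : e2 ≠ e3)
    (hcard : ({e1, e2, e3} : Finset (Fin 3 ⊕ Fin 3)).card = 2 + 1)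
    (hm1 : mu4pts (({e1, e2, e3} : Finset _).erase e1) = 0)
    (hm2 : mu4pts (({e1, e2, e3} : Finset _).erase e2) = 0)
    (hm3 : mu4pts (({e1, e2, e3} : Finset _).erase e3) = ⊤) :
    x e1 = x e2 := by
  have h := extract x hx e1 e2 e3 h12 h13 h23 hcard
  rw [hm1, hm2, hm3, zero_add, zero_add, top_add] at h
  exact eq_of_Q3_top h
/-- The tropical linear space of this matroid is tropically isotropic, yet the matroid fails
the rank-2 tropical symplectic relation `min(μ_{11̄}, μ_{22̄}, μ_{33̄})` (attained only once). -/
theorem mu4pts_isotropic_not_symplectic :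
    (∀ x ∈ TLS 2 mu4pts, ∀ y ∈ TLS 2 mu4pts,
      AAT (fun l : Fin 3 ⊕ Fin 3 => x l + y (Sum.swap l))) ∧
    ¬ AAT (fun i : Fin 3 => mu4pts {Sum.inl i, Sum.inr i}) := by
  constructor
  · intro x hx y hy
    have enum : ∀ l : Fin 3 ⊕ Fin 3, l = Sum.inl 0 ∨ l = Sum.inl 1 ∨ l = Sum.inl 2 ∨
        l = Sum.inr 0 ∨ l = Sum.inr 1 ∨ l = Sum.inr 2 := by decide
    have ex0 : x (Sum.inl 0) = x (Sum.inr 0) :=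
      extractE x hx (Sum.inl 0) (Sum.inr 0) (Sum.inl 2) (by decide) (by decide) (by decide)
        (by decide) (mu_zero _ (by decide)) (mu_zero _ (by decide)) (mu_top _ (by decide))
    have ex1 : x (Sum.inl 1) = x (Sum.inr 1) :=
      extractE x hx (Sum.inl 1) (Sum.inr 1) (Sum.inl 0) (by decide) (by decide) (by decide)
        (by decide) (mu_zero _ (by decide)) (mu_zero _ (by decide)) (mu_top _ (by decide))
    have ey0 : y (Sum.inl 0) = y (Sum.inr 0) :=
      extractE y hy (Sum.inl 0) (Sum.inr 0) (Sum.inl 2) (by decide) (by decide) (by decide)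
        (by decide) (mu_zero _ (by decide)) (mu_zero _ (by decide)) (mu_top _ (by decide))
    have ey1 : y (Sum.inl 1) = y (Sum.inr 1) :=
      extractE y hy (Sum.inl 1) (Sum.inr 1) (Sum.inl 0) (by decide) (by decide) (by decide)
        (by decide) (mu_zero _ (by decide)) (mu_zero _ (by decide)) (mu_top _ (by decide))
    have Qx1 : Q3 (x (Sum.inl 0)) (x (Sum.inl 1)) (x (Sum.inl 2)) :=
      extractQ x hx (Sum.inl 0) (Sum.inl 1) (Sum.inl 2) (by decide) (by decide) (by decide)
        (by decide) (mu_zero _ (by decide)) (mu_zero _ (by decide)) (mu_zero _ (by decide))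
    have Qx2 : Q3 (x (Sum.inl 0)) (x (Sum.inl 2)) (x (Sum.inr 2)) :=
      extractQ x hx (Sum.inl 0) (Sum.inl 2) (Sum.inr 2) (by decide) (by decide) (by decide)
        (by decide) (mu_zero _ (by decide)) (mu_zero _ (by decide)) (mu_zero _ (by decide))
    have Qx3 : Q3 (x (Sum.inl 1)) (x (Sum.inl 2)) (x (Sum.inr 2)) :=
      extractQ x hx (Sum.inl 1) (Sum.inl 2) (Sum.inr 2) (by decide) (by decide) (by decide)
        (by decide) (mu_zero _ (by decide)) (mu_zero _ (by decide)) (mu_zero _ (by decide))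
    have Qx4 : Q3 (x (Sum.inl 0)) (x (Sum.inl 1)) (x (Sum.inr 2)) :=
      extractQ x hx (Sum.inl 0) (Sum.inl 1) (Sum.inr 2) (by decide) (by decide) (by decide)
        (by decide) (mu_zero _ (by decide)) (mu_zero _ (by decide)) (mu_zero _ (by decide))
    have Qy1 : Q3 (y (Sum.inl 0)) (y (Sum.inl 1)) (y (Sum.inl 2)) :=
      extractQ y hy (Sum.inl 0) (Sum.inl 1) (Sum.inl 2) (by decide) (by decide) (by decide)
        (by decide) (mu_zero _ (by decide)) (mu_zero _ (by decide)) (mu_zero _ (by decide))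
    have Qy2 : Q3 (y (Sum.inl 0)) (y (Sum.inl 2)) (y (Sum.inr 2)) :=
      extractQ y hy (Sum.inl 0) (Sum.inl 2) (Sum.inr 2) (by decide) (by decide) (by decide)
        (by decide) (mu_zero _ (by decide)) (mu_zero _ (by decide)) (mu_zero _ (by decide))
    have Qy3 : Q3 (y (Sum.inl 1)) (y (Sum.inl 2)) (y (Sum.inr 2)) :=
      extractQ y hy (Sum.inl 1) (Sum.inl 2) (Sum.inr 2) (by decide) (by decide) (by decide)
        (by decide) (mu_zero _ (by decide)) (mu_zero _ (by decide)) (mu_zero _ (by decide))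
    have Qy4 : Q3 (y (Sum.inl 0)) (y (Sum.inl 1)) (y (Sum.inr 2)) :=
      extractQ y hy (Sum.inl 0) (Sum.inl 1) (Sum.inr 2) (by decide) (by decide) (by decide)
        (by decide) (mu_zero _ (by decide)) (mu_zero _ (by decide)) (mu_zero _ (by decide))
    have F0 : x (Sum.inr 0) + y (Sum.inl 0) = x (Sum.inl 0) + y (Sum.inr 0) := by
      rw [← ex0, ey0]
    have F1 : x (Sum.inr 1) + y (Sum.inl 1) = x (Sum.inl 1) + y (Sum.inr 1) := by
      rw [← ex1, ey1]
    -- the C-strict-minimum case is impossible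
    have keyC : x (Sum.inl 2) + y (Sum.inr 2) < x (Sum.inl 0) + y (Sum.inr 0) →
        x (Sum.inl 2) + y (Sum.inr 2) < x (Sum.inl 1) + y (Sum.inr 1) →
        x (Sum.inl 2) + y (Sum.inr 2) < x (Sum.inr 2) + y (Sum.inl 2) → False := by
      intro hCA hCB hCD
      refine key Qx1 Qx2 Qx3 Qy4 Qy2 Qy3 ?_ ?_ hCD
      · rw [ey0]; exact hCA
      · rw [ey1]; exact hCB
    -- the D-strict-minimum case is impossible
    have keyD : x (Sum.inr 2) + y (Sum.inl 2) < x (Sum.inl 0) + y (Sum.inr 0) →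
        x (Sum.inr 2) + y (Sum.inl 2) < x (Sum.inl 1) + y (Sum.inr 1) →
        x (Sum.inr 2) + y (Sum.inl 2) < x (Sum.inl 2) + y (Sum.inr 2) → False := by
      intro hDA hDB hDC
      refine key Qy1 Qy2 Qy3 Qx4 Qx2 Qx3 ?_ ?_ ?_
      · rw [add_comm (y (Sum.inl 2)), add_comm (y (Sum.inl 0)), ey0]; exact hDA
      · rw [add_comm (y (Sum.inl 2)), add_comm (y (Sum.inl 1)), ey1]; exact hDB
      · rw [add_comm (y (Sum.inl 2)), add_comm (y (Sum.inr 2))]; exact hDC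
    -- witness builders
    have wit0 : x (Sum.inl 0) + y (Sum.inr 0) ≤ x (Sum.inl 1) + y (Sum.inr 1) →
        x (Sum.inl 0) + y (Sum.inr 0) ≤ x (Sum.inl 2) + y (Sum.inr 2) →
        x (Sum.inl 0) + y (Sum.inr 0) ≤ x (Sum.inr 2) + y (Sum.inl 2) →
        AAT (fun l : Fin 3 ⊕ Fin 3 => x l + y (Sum.swap l)) := by
      intro hab hac had
      refine Or.inr ⟨Sum.inl 0, Sum.inr 0, by decide, ?_, ?_⟩
      · show x (Sum.inl 0) + y (Sum.swap (Sum.inl 0)) = x (Sum.inr 0) + y (Sum.swap (Sum.inr 0))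
        simp only [Sum.swap_inl, Sum.swap_inr]
        exact F0.symm
      · intro l
        rcases enum l with rfl | rfl | rfl | rfl | rfl | rfl <;>
          show x (Sum.inl 0) + y (Sum.swap (Sum.inl 0)) ≤ _ <;>
          simp only [Sum.swap_inl, Sum.swap_inr] <;>
          first
            | exact le_rfl
            | exact hab
            | exact hac
            | exact had
            | (rw [F0])
            | (rw [F1]; exact hab)
    have wit1 : x (Sum.inl 1) + y (Sum.inr 1) ≤ x (Sum.inl 0) + y (Sum.inr 0) →
        x (Sum.inl 1) + y (Sum.inr 1) ≤ x (Sum.inl 2) + y (Sum.inr 2) →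
        x (Sum.inl 1) + y (Sum.inr 1) ≤ x (Sum.inr 2) + y (Sum.inl 2) →
        AAT (fun l : Fin 3 ⊕ Fin 3 => x l + y (Sum.swap l)) := by
      intro hba hbc hbd
      refine Or.inr ⟨Sum.inl 1, Sum.inr 1, by decide, ?_, ?_⟩
      · show x (Sum.inl 1) + y (Sum.swap (Sum.inl 1)) = x (Sum.inr 1) + y (Sum.swap (Sum.inr 1))
        simp only [Sum.swap_inl, Sum.swap_inr]
        exact F1.symm
      · intro l
        rcases enum l with rfl | rfl | rfl | rfl | rfl | rfl <;>
          show x (Sum.inl 1) + y (Sum.swap (Sum.inl 1)) ≤ _ <;>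
          simp only [Sum.swap_inl, Sum.swap_inr] <;>
          first
            | exact le_rfl
            | exact hba
            | exact hbc
            | exact hbd
            | (rw [F1])
            | (rw [F0]; exact hba)
    have wit2 : x (Sum.inl 2) + y (Sum.inr 2) = x (Sum.inr 2) + y (Sum.inl 2) →
        x (Sum.inl 2) + y (Sum.inr 2) ≤ x (Sum.inl 0) + y (Sum.inr 0) →
        x (Sum.inl 2) + y (Sum.inr 2) ≤ x (Sum.inl 1) + y (Sum.inr 1) →
        AAT (fun l : Fin 3 ⊕ Fin 3 => x l + y (Sum.swap l)) := by
      intro hcd hca hcb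
      refine Or.inr ⟨Sum.inl 2, Sum.inr 2, by decide, ?_, ?_⟩
      · show x (Sum.inl 2) + y (Sum.swap (Sum.inl 2)) = x (Sum.inr 2) + y (Sum.swap (Sum.inr 2))
        simp only [Sum.swap_inl, Sum.swap_inr]
        exact hcd
      · intro l
        rcases enum l with rfl | rfl | rfl | rfl | rfl | rfl <;>
          show x (Sum.inl 2) + y (Sum.swap (Sum.inl 2)) ≤ _ <;>
          simp only [Sum.swap_inl, Sum.swap_inr] <;>
          first
            | exact le_rfl
            | exact hca
            | exact hcb
            | exact hcd.le
            | (rw [F0]; exact hca)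
            | (rw [F1]; exact hcb)
    rcases le_total (x (Sum.inl 0) + y (Sum.inr 0)) (x (Sum.inl 1) + y (Sum.inr 1)) with hab | hba
    · rcases lt_or_ge (x (Sum.inl 2) + y (Sum.inr 2)) (x (Sum.inl 0) + y (Sum.inr 0)) with hca | hac
      · rcases lt_or_ge (x (Sum.inr 2) + y (Sum.inl 2)) (x (Sum.inl 0) + y (Sum.inr 0)) with hda | had
        · rcases lt_trichotomy (x (Sum.inl 2) + y (Sum.inr 2)) (x (Sum.inr 2) + y (Sum.inl 2))
            with hcd | hcd | hdc
          · exact absurd (keyC hca (lt_of_lt_of_le hca hab) hcd) not_false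
          · exact wit2 hcd hca.le (lt_of_lt_of_le hca hab).le
          · exact absurd (keyD hda (lt_of_lt_of_le hda hab) hdc) not_false
        · exact absurd (keyC hca (lt_of_lt_of_le hca hab) (lt_of_lt_of_le hca had)) not_false
      · rcases lt_or_ge (x (Sum.inr 2) + y (Sum.inl 2)) (x (Sum.inl 0) + y (Sum.inr 0)) with hda | had
        · exact absurd (keyD hda (lt_of_lt_of_le hda hab) (lt_of_lt_of_le hda hac)) not_false
        · exact wit0 hab hac had
    · rcases lt_or_ge (x (Sum.inl 2) + y (Sum.inr 2)) (x (Sum.inl 1) + y (Sum.inr 1)) with hcb | hbc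
      · rcases lt_or_ge (x (Sum.inr 2) + y (Sum.inl 2)) (x (Sum.inl 1) + y (Sum.inr 1)) with hdb | hbd
        · rcases lt_trichotomy (x (Sum.inl 2) + y (Sum.inr 2)) (x (Sum.inr 2) + y (Sum.inl 2))
            with hcd | hcd | hdc
          · exact absurd (keyC (lt_of_lt_of_le hcb hba) hcb hcd) not_false
          · exact wit2 hcd (lt_of_lt_of_le hcb hba).le hcb.le
          · exact absurd (keyD (lt_of_lt_of_le hdb hba) hdb hdc) not_false
        · exact absurd (keyC (lt_of_lt_of_le hcb hba) hcb (lt_of_lt_of_le hcb hbd)) not_false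
      · rcases lt_or_ge (x (Sum.inr 2) + y (Sum.inl 2)) (x (Sum.inl 1) + y (Sum.inr 1)) with hdb | hbd
        · exact absurd (keyD (lt_of_lt_of_le hdb hba) hdb (lt_of_lt_of_le hdb hbc)) not_false
        · exact wit1 hba hbc hbd
  · intro h
    have m0 : mu4pts {Sum.inl 0, Sum.inr 0} = ⊤ := mu_top _ (by decide)
    have m1 : mu4pts {Sum.inl 1, Sum.inr 1} = ⊤ := mu_top _ (by decide)
    have m2 : mu4pts {Sum.inl 2, Sum.inr 2} = 0 := mu_zero _ (by decide)
    rcases h with hall | ⟨i, j, hij, heq, hle⟩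
    · have h2 : mu4pts {Sum.inl 2, Sum.inr 2} = ⊤ := hall 2
      rw [m2] at h2
      simp at h2
    · have e3 : ∀ i : Fin 3, i = 0 ∨ i = 1 ∨ i = 2 := by decide
      rcases e3 i with rfl | rfl | rfl
      · have h2 : mu4pts {Sum.inl 0, Sum.inr 0} ≤ mu4pts {Sum.inl 2, Sum.inr 2} := hle 2
        rw [m0, m2] at h2
        simp at h2
      · have h2 : mu4pts {Sum.inl 1, Sum.inr 1} ≤ mu4pts {Sum.inl 2, Sum.inr 2} := hle 2
        rw [m1, m2] at h2
        simp at h2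
      · rcases e3 j with rfl | rfl | rfl
        · have h2 : mu4pts {Sum.inl 2, Sum.inr 2} = mu4pts {Sum.inl 0, Sum.inr 0} := heq
          rw [m2, m0] at h2
          simp at h2
        · have h2 : mu4pts {Sum.inl 2, Sum.inr 2} = mu4pts {Sum.inl 1, Sum.inr 1} := heq
          rw [m2, m1] at h2
          simp at h2
        · exact hij rfl
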